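/- Let $(n_k)_{k \geq 1}$ be a sequence of positive integers with $n_1 = 1$ and $n_{k+1} > 2 n_k^k$ for all $k \geq 1$, and define $f(n) = n_k^k + (n - n_k)$ for $n_k \leq n < n_{k+1}$. Then $\limsup_{n \to \infty} \frac{\log f(n)}{\log n} = \infty$. -/

import Mathlib

open Filter

/-- `f` is a representation of `n` with parts in `A` and multiplicities in `M`:
`n = ∑ a ∈ A, m_a * a` with each nonzero multiplicity lying in `M`. -/
def IsRepr (A M : Set ℕ) (n : ℕ) (f : ℕ →₀ ℕ) : Prop :=
  (∀ a ∈ f.support, a ∈ A) ∧ (∀ a ∈ f.support, f a ∈ M) ∧ f.sum (fun a m => m * a) = n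

/-- number of partitions of `n` with parts in `A` and multiplicities in `M` -/
noncomputable def pAM (A M : Set ℕ) (n : ℕ) : ℕ :=
  Nat.card {f : ℕ →₀ ℕ // IsRepr A M n f}

/-- number of partitions of `n` with parts in `A` (unrestricted multiplicities) -/
noncomputable def pA (A : Set ℕ) (n : ℕ) : ℕ :=
  pAM A {m | 0 < m} n

/-- counting function of a set of positive integers -/
noncomputable def cnt (S : Set ℕ) (x : ℝ) : ℕ :=
  Nat.card {a : ℕ // a ∈ S ∧ (a : ℝ) ≤ x}

theorem stmt5 (n : ℕ → ℕ) (hn1 : n 1 = 1) (hpos : ∀ k ≥ 1, 0 < n k)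
    (hgrow : ∀ k ≥ 1, 2 * n k ^ k < n (k + 1))
    (f : ℕ → ℕ)
    (hf : ∀ k ≥ 1, ∀ m : ℕ, n k ≤ m → m < n (k + 1) → f m = n k ^ k + (m - n k)) :
    limsup (fun m : ℕ => ((Real.log (f m) / Real.log m : ℝ) : EReal)) atTop = ⊤ := by
  -- n is strictly increasing on k ≥ 1, with n k ≥ k
  have hstep : ∀ k ≥ 1, n k < n (k + 1) := by
    intro k hk
    have h1 := hgrow k hk
    have h2 : n k ≤ n k ^ k := Nat.le_self_pow (by omega) _
    have := hpos k hk
    nlinarith [pow_pos this k]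
  have hgek : ∀ k ≥ 1, k ≤ n k := by
    intro k hk
    induction k with
    | zero => omega
    | succ j ih =>
      rcases Nat.eq_or_lt_of_le hk with h | h
      · have hj1 : j + 1 = 1 := h.symm
        rw [hj1, hn1]
      · have hj : 1 ≤ j := by omega
        have := hstep j hj
        have := ih hj
        omega
  have h3 : ∀ k ≥ 2, 3 ≤ n k := by
    intro k hk
    induction k with
    | zero => omega
    | succ j ih =>
      rcases Nat.eq_or_lt_of_le hk with h | h
      · have h2 := hgrow 1 le_rfl
        simp [hn1] at h2
        have : j + 1 = 2 := h.symm
        rw [this]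
        omega
      · have hj : 2 ≤ j := by omega
        have := hstep j (by omega)
        have := ih hj
        omega
  -- key: at m = n k, the ratio equals k
  have key : ∀ k ≥ 2, ((Real.log (f (n k)) / Real.log (n k) : ℝ) : EReal) = (k : ℝ) := by
    intro k hk
    have hfk : f (n k) = n k ^ k := by
      rw [hf k (by omega) (n k) le_rfl (hstep k (by omega))]
      simp
    have hnk3 : (3:ℝ) ≤ (n k : ℝ) := by exact_mod_cast h3 k hk
    have hlogpos : 0 < Real.log (n k) := Real.log_pos (by linarith)
    rw [hfk]
    push_cast
    rw [Real.log_pow]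
    rw [mul_div_assoc, div_self (ne_of_gt hlogpos), mul_one]
    norm_cast
  -- limsup ≥ any real K
  have hge : ∀ K : ℝ, (K : EReal) ≤ limsup (fun m : ℕ => ((Real.log (f m) / Real.log m : ℝ) : EReal)) atTop := by
    intro K
    apply le_limsup_of_frequently_le ?_ (by isBoundedDefault)
    rw [frequently_atTop]
    intro N
    set k := max (max 2 (⌈K⌉₊ + 1)) N with hkdef
    refine ⟨n k, ?_, ?_⟩
    · calc N ≤ k := le_max_right _ _
        _ ≤ n k := hgek k (by omega)
    · rw [key k (le_trans (le_max_left _ _) (le_max_left _ _))]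
      have : K ≤ (k : ℝ) := by
        have h1 : (⌈K⌉₊ : ℝ) ≤ k := by
          have : ⌈K⌉₊ ≤ k := by omega
          exact_mod_cast this
        calc K ≤ (⌈K⌉₊ : ℝ) := Nat.le_ceil K
          _ ≤ (k : ℝ) := h1
      exact_mod_cast this
  rw [EReal.eq_top_iff_forall_lt]
  intro y
  calc (y : EReal) < ((y + 1 : ℝ) : EReal) := by exact_mod_cast lt_add_one y
    _ ≤ _ := hge (y + 1)
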